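/- Let ν, ν' ∈ ℝ³ be unit vectors with ν + ν' ≠ 0, and set n₀ = (ν + ν')/|ν + ν'|. Let τ ∈ ℝ³ be a unit vector with τ·ν = τ·ν' = 0, and let n ∈ ℝ³ satisfy n·τ = 0 and n·n₀ = 1. Suppose a, b ≥ 0 are such that |n × ν| ≤ a, |n × ν'| ≤ b, and a + b ≤ 1. Then |ν − ν'| ≤ a + b and |n − ν| ≤ 4(a + b). -/

import Mathlib

open scoped RealInnerProductSpace

noncomputable section

/-- Euclidean 3-space. -/
abbrev E3 := EuclideanSpace ℝ (Fin 3)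

/-- The cross product on `ℝ³`. -/
def cross3 (u v : E3) : E3 :=
  (WithLp.equiv 2 (Fin 3 → ℝ)).symm
    ![u 1 * v 2 - u 2 * v 1, u 2 * v 0 - u 0 * v 2, u 0 * v 1 - u 1 * v 0]

set_option maxHeartbeats 4000000

lemma inner3 (u v : E3) : ⟪u, v⟫ = u 0 * v 0 + u 1 * v 1 + u 2 * v 2 := by
  simp [PiLp.inner_apply, RCLike.inner_apply, Fin.sum_univ_three]; ring

lemma normsq3 (u : E3) : ‖u‖ ^ 2 = u 0 ^ 2 + u 1 ^ 2 + u 2 ^ 2 := by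
  rw [← real_inner_self_eq_norm_sq, inner3]; ring

lemma cross3_normsq (u v : E3) :
    ‖cross3 u v‖ ^ 2 = ‖u‖ ^ 2 * ‖v‖ ^ 2 - ⟪u, v⟫ ^ 2 := by
  rw [normsq3, normsq3, normsq3, inner3]
  simp only [cross3, WithLp.equiv_symm_apply, PiLp.toLp_apply,
    Matrix.cons_val_two, Matrix.tail_cons, Matrix.head_cons]
  norm_num [Matrix.cons_val_zero, Matrix.cons_val_one]
  ring

lemma quad_id (x y z w : E3) :
    ⟪x, cross3 y z⟫ * ⟪w, w⟫ =
      ⟪w, cross3 y z⟫ * ⟪x, w⟫ + ⟪x, cross3 w z⟫ * ⟪y, w⟫ +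
        ⟪x, cross3 y w⟫ * ⟪z, w⟫ := by
  simp only [inner3, cross3, WithLp.equiv_symm_apply, PiLp.toLp_apply,
    Matrix.cons_val_two, Matrix.tail_cons, Matrix.head_cons]
  norm_num [Matrix.cons_val_zero, Matrix.cons_val_one]
  ring

lemma gram_id (x y z : E3) :
    ⟪x, cross3 y z⟫ ^ 2 =
      ‖x‖^2 * (‖y‖^2 * ‖z‖^2 - ⟪y,z⟫^2) - ⟪x,y⟫ * (⟪x,y⟫ * ‖z‖^2 - ⟪x,z⟫ * ⟪y,z⟫)
        + ⟪x,z⟫ * (⟪x,y⟫ * ⟪y,z⟫ - ⟪x,z⟫ * ‖y‖^2) := by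
  simp only [inner3, normsq3, cross3, WithLp.equiv_symm_apply, PiLp.toLp_apply,
    Matrix.cons_val_two, Matrix.tail_cons, Matrix.head_cons]
  norm_num [Matrix.cons_val_zero, Matrix.cons_val_one]
  ring

lemma le_of_sq_le_sq' (r t : ℝ) (hr : 0 ≤ r) (ht : 0 ≤ t) (h : r ^ 2 ≤ t ^ 2) :
    r ≤ t := by nlinarith

lemma scalar1 (M X Y P a b : ℝ) (ha : 0 ≤ a) (hb : 0 ≤ b)
    (hu : M - X ^ 2 ≤ a ^ 2) (hv : M - Y ^ 2 ≤ b ^ 2)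
    (hv0 : 0 ≤ M - Y ^ 2)
    (hK : X ^ 2 + Y ^ 2 = M * (1 - P) + 2 * P)
    (hsq : (X + Y) ^ 2 = 2 + 2 * P) :
    2 - 2 * P ≤ (a + b) ^ 2 := by
  have key1 : (2 - 2 * P - (M - X ^ 2) - (M - Y ^ 2)) ^ 2
      = 4 * (M - X ^ 2) * (M - Y ^ 2) := by
    linear_combination (4 + 2 * (X + Y) ^ 2 - 4 * P) * hK +
      (2 * M * (1 - P) - 2 + 2 * P - (X + Y) ^ 2) * hsq
  nlinarith [key1, mul_le_mul hu hv hv0 (sq_nonneg a), mul_nonneg ha hb]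

lemma scalar2 (M X Y P c : ℝ) (hc0 : 0 ≤ c) (hc1 : c ≤ 1)
    (huv : (M - X ^ 2) + (M - Y ^ 2) ≤ c ^ 2)
    (hK : X ^ 2 + Y ^ 2 = M * (1 - P) + 2 * P)
    (hsq : (X + Y) ^ 2 = 2 + 2 * P)
    (hXYpos : 0 < X + Y) (hM1 : 1 ≤ M) (hP1 : P ≤ 1)
    (h2P : 2 - 2 * P ≤ c ^ 2) :
    M - 2 * X + 1 ≤ (4 * c) ^ 2 := by
  have hPhalf : 1 / 2 ≤ P := by nlinarith
  have heuv : (M - 1) * (1 + P) = (M - X ^ 2) + (M - Y ^ 2) - (1 - P) := by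
    linear_combination hK
  have hXmY : (X - Y) ^ 2 = 2 * (1 - P) * (M - 1) := by
    linear_combination 2 * hK - hsq
  have hM10 : 0 ≤ M - 1 := by linarith
  have hMub : M - 1 ≤ 2 / 3 * c ^ 2 := by
    nlinarith [heuv, huv, mul_nonneg hM10 (by linarith : (0:ℝ) ≤ P - 1/2)]
  have hXmY2 : (X - Y) ^ 2 ≤ 2 / 3 * c ^ 4 := by
    nlinarith [hXmY, mul_le_mul h2P hMub hM10 (by positivity : (0:ℝ) ≤ c ^ 2)]
  have hXmYlb : -(5 / 6) * c ^ 2 ≤ X - Y := by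
    nlinarith [hXmY2, hc0, sq_nonneg (X - Y + (5/6) * c ^ 2)]
  have hc21 : c ^ 2 ≤ 1 := by nlinarith
  have hc4 : c ^ 4 ≤ c ^ 2 := by nlinarith [sq_nonneg c]
  have hsq' : (2 - c ^ 2 / 2) ^ 2 ≤ (X + Y) ^ 2 := by nlinarith
  have hXpYlb : 2 - c ^ 2 / 2 ≤ X + Y := by
    nlinarith [hsq', hXYpos]
  nlinarith [hMub, hXmYlb, hXpYlb, hc0, sq_nonneg c]

/-- comparison of a pseudo-unit edge director `n` with the two
triangle normals `ν, ν'` whose normalized average is `n₀`. -/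
theorem stmt_4 (ν ν' τ n : E3) (a b : ℝ)
    (hν : ‖ν‖ = 1) (hν' : ‖ν'‖ = 1) (hsum : ν + ν' ≠ 0)
    (hτ : ‖τ‖ = 1) (hτν : ⟪τ, ν⟫ = 0) (hτν' : ⟪τ, ν'⟫ = 0)
    (hnτ : ⟪n, τ⟫ = 0) (hnn₀ : ⟪n, ‖ν + ν'‖⁻¹ • (ν + ν')⟫ = 1)
    (ha : 0 ≤ a) (hb : 0 ≤ b)
    (hcrossa : ‖cross3 n ν‖ ≤ a) (hcrossb : ‖cross3 n ν'‖ ≤ b)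
    (hab : a + b ≤ 1) :
    ‖ν - ν'‖ ≤ a + b ∧ ‖n - ν‖ ≤ 4 * (a + b) := by
  have hS2 : ‖ν + ν'‖ ^ 2 = 2 + 2 * ⟪ν, ν'⟫ := by
    rw [norm_add_sq_real, hν, hν']; ring
  have hSpos : 0 < ‖ν + ν'‖ := norm_pos_iff.mpr hsum
  have hXY : ⟪n, ν⟫ + ⟪n, ν'⟫ = ‖ν + ν'‖ := by
    have h : ‖ν + ν'‖⁻¹ * (⟪n, ν⟫ + ⟪n, ν'⟫) = 1 := by
      rw [← inner_add_right, ← inner_smul_right]; exact hnn₀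
    have h2 : ⟪n, ν⟫ + ⟪n, ν'⟫
        = ‖ν + ν'‖ * (‖ν + ν'‖⁻¹ * (⟪n, ν⟫ + ⟪n, ν'⟫)) := by
      rw [← mul_assoc, mul_inv_cancel₀ hSpos.ne', one_mul]
    rw [h, mul_one] at h2
    exact h2
  have hsq : (⟪n, ν⟫ + ⟪n, ν'⟫) ^ 2 = 2 + 2 * ⟪ν, ν'⟫ := by rw [hXY]; exact hS2
  have hXYpos : 0 < ⟪n, ν⟫ + ⟪n, ν'⟫ := by rw [hXY]; exact hSpos
  have hM1 : 1 ≤ ‖n‖ ^ 2 := by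
    have h2 := real_inner_le_norm n (‖ν + ν'‖⁻¹ • (ν + ν'))
    have h3 : ‖‖ν + ν'‖⁻¹ • (ν + ν')‖ = 1 := by
      rw [norm_smul, norm_inv, norm_norm]
      field_simp
    rw [h3, mul_one, hnn₀] at h2
    nlinarith [h2, norm_nonneg n]
  have hP1 : ⟪ν, ν'⟫ ≤ 1 := by
    have := real_inner_le_norm ν ν'
    rw [hν, hν'] at this; linarith
  have hu : ‖n‖ ^ 2 - ⟪n, ν⟫ ^ 2 ≤ a ^ 2 := by
    have h := pow_le_pow_left₀ (norm_nonneg _) hcrossa 2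
    rw [cross3_normsq, hν] at h
    nlinarith [h]
  have hv : ‖n‖ ^ 2 - ⟪n, ν'⟫ ^ 2 ≤ b ^ 2 := by
    have h := pow_le_pow_left₀ (norm_nonneg _) hcrossb 2
    rw [cross3_normsq, hν'] at h
    nlinarith [h]
  have hu0 : 0 ≤ ‖n‖ ^ 2 - ⟪n, ν⟫ ^ 2 := by
    have h := sq_nonneg ‖cross3 n ν‖
    rw [cross3_normsq, hν] at h
    nlinarith [h]
  have hv0 : 0 ≤ ‖n‖ ^ 2 - ⟪n, ν'⟫ ^ 2 := by
    have h := sq_nonneg ‖cross3 n ν'‖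
    rw [cross3_normsq, hν'] at h
    nlinarith [h]
  -- the triple product ⟪n, ν × ν'⟫ vanishes
  have hT : ⟪n, cross3 ν ν'⟫ = 0 := by
    have hq := quad_id n ν ν' τ
    have hττ : ⟪τ, τ⟫ = (1:ℝ) := by
      rw [real_inner_self_eq_norm_sq, hτ]; norm_num
    have h1 : ⟪ν, τ⟫ = 0 := by rw [real_inner_comm]; exact hτν
    have h2 : ⟪ν', τ⟫ = 0 := by rw [real_inner_comm]; exact hτν'
    rw [hττ, hnτ, h1, h2] at hq
    simpa using hq
  -- Gram relation
  have hG : ‖n‖ ^ 2 * (1 - ⟪ν, ν'⟫ ^ 2)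
      = ⟪n, ν⟫ ^ 2 + ⟪n, ν'⟫ ^ 2 - 2 * ⟪n, ν⟫ * ⟪n, ν'⟫ * ⟪ν, ν'⟫ := by
    have hg := gram_id n ν ν'
    rw [hT, hν, hν'] at hg
    linear_combination -hg
  have h1P : 0 < 1 + ⟪ν, ν'⟫ := by nlinarith [hS2, hSpos]
  have hK : ⟪n, ν⟫ ^ 2 + ⟪n, ν'⟫ ^ 2 = ‖n‖ ^ 2 * (1 - ⟪ν, ν'⟫) + 2 * ⟪ν, ν'⟫ := by
    apply mul_left_cancel₀ (ne_of_gt h1P)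
    linear_combination (-1 : ℝ) * hG + ⟪ν, ν'⟫ * hsq
  have goal1sq : 2 - 2 * ⟪ν, ν'⟫ ≤ (a + b) ^ 2 :=
    scalar1 (‖n‖ ^ 2) ⟪n, ν⟫ ⟪n, ν'⟫ ⟪ν, ν'⟫ a b ha hb hu hv hv0 hK hsq
  have hnorm1 : ‖ν - ν'‖ ^ 2 = 2 - 2 * ⟪ν, ν'⟫ := by
    rw [norm_sub_sq_real, hν, hν']; ring
  have goal1 : ‖ν - ν'‖ ≤ a + b := by
    refine le_of_sq_le_sq' _ _ (norm_nonneg _) (by linarith) ?_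
    rw [hnorm1]; exact goal1sq
  refine ⟨goal1, ?_⟩
  have huv : (‖n‖ ^ 2 - ⟪n, ν⟫ ^ 2) + (‖n‖ ^ 2 - ⟪n, ν'⟫ ^ 2) ≤ (a + b) ^ 2 := by
    nlinarith [hu, hv, mul_nonneg ha hb]
  have goal2sq : ‖n‖ ^ 2 - 2 * ⟪n, ν⟫ + 1 ≤ (4 * (a + b)) ^ 2 :=
    scalar2 (‖n‖ ^ 2) ⟪n, ν⟫ ⟪n, ν'⟫ ⟪ν, ν'⟫ (a + b) (by positivity) hab huv hK hsq
      hXYpos hM1 hP1 goal1sq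
  have hnorm2 : ‖n - ν‖ ^ 2 = ‖n‖ ^ 2 - 2 * ⟪n, ν⟫ + 1 := by
    rw [norm_sub_sq_real, hν]; ring
  refine le_of_sq_le_sq' _ _ (norm_nonneg _) (by linarith) ?_
  rw [hnorm2]; exact goal2sq
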